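/- Let (X,d) be a complete metric space, let f : X → (−∞,∞] be lower semicontinuous, and let x̄ be a local minimizer of f with f̄ = f(x̄) finite. If the level set L_{f̄} = {x ∈ X : f(x) ≤ f̄} is identifiable for f at x̄, then x̄ is a weak sharp minimizer: there exists ε > 0 such that f(x) ≥ f̄ + ε·dist(x, L_{f̄}) for all x near x̄, where dist(x, L_{f̄}) = inf_{y ∈ L_{f̄}} d(x,y). -/

import Mathlib

open Filter Topology
open scoped ENNReal NNReal

/-- The slope `|∇f|(x)`: the infimum of all `δ > 0` such that `x` is a local minimizer of
`f + δ·d(·,x)`; it equals `∞` at points where `f x = ⊤`. -/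
noncomputable def slopeM {X : Type*} [MetricSpace X] (f : X → EReal) (x : X) : ℝ≥0∞ :=
  if f x = ⊤ then ⊤
  else sInf {δ : ℝ≥0∞ | ∃ c : ℝ, 0 < c ∧ δ = ENNReal.ofReal c ∧
    ∀ᶠ z in 𝓝 x, f x ≤ f z + ((c * dist z x : ℝ) : EReal)}

/-- The modulus of identifiability: `liminf_{x → xbar, x ∉ M, f(x) → f(xbar)} |∇f|(x)`. -/
noncomputable def identModulus {X : Type*} [MetricSpace X] (f : X → EReal) (M : Set X)
    (xbar : X) : ℝ≥0∞ :=
  Filter.liminf (slopeM f) (𝓝[Mᶜ] xbar ⊓ Filter.comap f (𝓝 (f xbar)))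

/-- `M` is an identifiable set for `f` at `xbar`: it is closed, contains `xbar`, and the
modulus of identifiability is strictly positive. -/
def Identifiable {X : Type*} [MetricSpace X] (f : X → EReal) (M : Set X) (xbar : X) : Prop :=
  IsClosed M ∧ xbar ∈ M ∧ 0 < identModulus f M xbar

theorem my_ekeland {Y : Type*} [MetricSpace Y] [CompleteSpace Y]
    (g : Y → ℝ) (hg : LowerSemicontinuous g) (b : ℝ) (hb : ∀ w, b ≤ g w)
    (c : ℝ) (hc : 0 < c) (x₀ : Y) :
    ∃ y : Y, g y + c * dist y x₀ ≤ g x₀ ∧ ∀ w, g y ≤ g w + c * dist w y := by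
  classical
  set S : Y → Set Y := fun x => {w | g w + c * dist w x ≤ g x} with hS
  have hmemS : ∀ x, x ∈ S x := by
    intro x; simp [hS]
  have hSne : ∀ x, (S x).Nonempty := fun x => ⟨x, hmemS x⟩
  have hSbdd : ∀ x, BddBelow (g '' S x) := by
    intro x; exact ⟨b, by rintro r ⟨w, -, rfl⟩; exact hb w⟩
  set m : Y → ℝ := fun x => sInf (g '' S x) with hm
  have hmle : ∀ x, m x ≤ g x := fun x => csInf_le (hSbdd x) ⟨x, hmemS x, rfl⟩
  have hmge : ∀ x, b ≤ m x := fun x =>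
    le_csInf ((hSne x).image g) (by rintro r ⟨w, -, rfl⟩; exact hb w)
  have hSineq : ∀ x, ∀ w ∈ S x, m x ≤ g w := by
    intro x w hw; exact csInf_le (hSbdd x) ⟨w, hw, rfl⟩
  have hStrans : ∀ x y, y ∈ S x → S y ⊆ S x := by
    intro x y hy w hw
    have h1 : g w + c * dist w y ≤ g y := hw
    have h2 : g y + c * dist y x ≤ g x := hy
    have htri : dist w x ≤ dist w y + dist y x := dist_triangle w y x
    have : c * dist w x ≤ c * dist w y + c * dist y x := by nlinarith
    simp only [hS, Set.mem_setOf_eq]; linarith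
  have hstep : ∀ x : Y, ∃ y, y ∈ S x ∧ g y ≤ (g x + m x) / 2 := by
    intro x
    rcases eq_or_lt_of_le (hmle x) with h | h
    · exact ⟨x, hmemS x, by linarith⟩
    · have : m x < (g x + m x) / 2 := by linarith
      obtain ⟨r, ⟨w, hw, rfl⟩, hr⟩ := exists_lt_of_csInf_lt ((hSne x).image g) this
      exact ⟨w, hw, hr.le⟩
  choose nxt hnxt1 hnxt2 using hstep
  set u : ℕ → Y := fun n => nxt^[n] x₀ with hu
  have hu0 : u 0 = x₀ := rfl
  have husucc : ∀ n, u (n + 1) = nxt (u n) := fun n =>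
    Function.iterate_succ_apply' nxt n x₀
  have humem : ∀ n, u (n + 1) ∈ S (u n) := fun n => by rw [husucc]; exact hnxt1 (u n)
  have hgdec : ∀ n, g (u (n + 1)) + c * dist (u (n+1)) (u n) ≤ g (u n) := fun n => humem n
  have hgantimono : ∀ n, g (u (n+1)) ≤ g (u n) := by
    intro n
    have := hgdec n
    have : c * dist (u (n+1)) (u n) ≥ 0 := by positivity
    linarith [hgdec n]
  -- D bounds
  have hmmono : ∀ n, m (u n) ≤ m (u (n+1)) := by
    intro n
    apply le_csInf ((hSne _).image g)
    rintro r ⟨w, hw, rfl⟩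
    exact hSineq _ _ (hStrans _ _ (humem n) hw)
  have hD : ∀ n, g (u n) - m (u n) ≤ (g x₀ - b) / 2 ^ n := by
    intro n
    induction n with
    | zero => simpa [hu0] using sub_le_sub (le_refl (g x₀)) (hmge x₀)
    | succ n ih =>
      have h1 : g (u (n+1)) ≤ (g (u n) + m (u n)) / 2 := by rw [husucc]; exact hnxt2 (u n)
      have h2 := hmmono n
      have : g (u (n+1)) - m (u (n+1)) ≤ (g (u n) - m (u n)) / 2 := by linarith
      rw [pow_succ]
      calc g (u (n+1)) - m (u (n+1)) ≤ (g (u n) - m (u n)) / 2 := this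
        _ ≤ ((g x₀ - b) / 2 ^ n) / 2 := by linarith
        _ = (g x₀ - b) / (2 ^ n * 2) := by ring
  -- Cauchy
  have hsum : ∀ n, dist (u n) (u (n+1)) ≤ (g (u n) - g (u (n+1))) / c := by
    intro n
    have := hgdec n
    rw [dist_comm]
    rw [le_div_iff₀ hc]
    linarith [hgdec n]
  have hgb : ∀ n, b ≤ g (u n) := fun n => hb _
  have hganti : Antitone (fun n => g (u n)) :=
    antitone_nat_of_succ_le hgantimono
  have hsummable : Summable (fun n => dist (u n) (u (n+1))) := by
    apply summable_of_sum_range_le (fun n => dist_nonneg)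
    intro n
    calc ∑ i ∈ Finset.range n, dist (u i) (u (i+1))
        ≤ ∑ i ∈ Finset.range n, (g (u i) - g (u (i+1))) / c :=
          Finset.sum_le_sum fun i _ => hsum i
      _ = (g (u 0) - g (u n)) / c := by
          rw [← Finset.sum_div, Finset.sum_range_sub']
      _ ≤ (g x₀ - b) / c := by
          have h1 : g (u 0) = g x₀ := by rw [hu0]
          have h2 := hgb n
          gcongr <;> linarith
  have hcauchy : CauchySeq u := cauchySeq_of_summable_dist hsummable
  obtain ⟨y, hy⟩ := cauchySeq_tendsto_of_complete hcauchy
  -- y ∈ S (u n) for all n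
  have hSclosed : ∀ x, IsClosed (S x) := by
    intro x
    have : LowerSemicontinuous fun w => g w + c * dist w x :=
      hg.add ((continuous_const.mul (continuous_id.dist continuous_const)).lowerSemicontinuous)
    exact this.isClosed_preimage (g x)
  have humemn : ∀ n k, u (n + k) ∈ S (u n) := by
    intro n k
    induction k with
    | zero => exact hmemS _
    | succ k ih =>
        have h := humem (n+k)
        rw [show n + (k+1) = n + k + 1 from rfl]
        exact hStrans _ _ ih h
  have hymem : ∀ n, y ∈ S (u n) := by
    intro n
    apply (hSclosed (u n)).mem_of_tendsto (hy.comp (tendsto_add_atTop_nat n))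
    exact Eventually.of_forall fun k => by simpa [Nat.add_comm] using humemn n k
  refine ⟨y, ?_, ?_⟩
  · have := hymem 0; rwa [hu0] at this
  · intro w
    by_contra hcon
    push_neg at hcon
    have hwS : ∀ n, w ∈ S (u n) := by
      intro n
      have h1 : g y + c * dist y (u n) ≤ g (u n) := hymem n
      have htri : dist w (u n) ≤ dist w y + dist y (u n) := dist_triangle w y (u n)
      have : c * dist w (u n) ≤ c * dist w y + c * dist y (u n) := by nlinarith
      simp only [hS, Set.mem_setOf_eq]
      linarith
    have hge : ∀ n, g y - (g x₀ - b) / 2 ^ n ≤ g w := by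
      intro n
      have h1 : m (u n) ≤ g w := hSineq _ _ (hwS n)
      have h2 : g y ≤ g (u n) := by
        have h3 : g y + c * dist y (u n) ≤ g (u n) := hymem n
        have : c * dist y (u n) ≥ 0 := by positivity
        linarith
      have h4 := hD n
      linarith
    have hlim : Tendsto (fun n : ℕ => g y - (g x₀ - b) / 2 ^ n) atTop (𝓝 (g y - 0)) := by
      apply Tendsto.const_sub
      simpa using tendsto_const_nhds.div_atTop (tendsto_pow_atTop_atTop_of_one_lt (by norm_num : (1:ℝ) < 2))
    have : g y ≤ g w := by
      have h := le_of_tendsto (f := fun n : ℕ => g y - (g x₀ - b) / 2 ^ n)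
        (by simpa using hlim) (Eventually.of_forall hge)
      linarith
    have : g w + c * dist w y < g w := lt_of_lt_of_le hcon this
    have : c * dist w y ≥ 0 := by positivity
    linarith

set_option maxHeartbeats 1000000 in
/-- Weak sharp minimizers: if the level set `{f ≤ f(xbar)}` is identifiable at a local
minimizer `xbar`, then `xbar` is a weak sharp minimizer. -/
theorem weak_sharp_minimizer_of_identifiable_levelSet
    {X : Type*} [MetricSpace X] [CompleteSpace X]
    (f : X → EReal) (hlsc : LowerSemicontinuous f) (hbot : ∀ z, f z ≠ ⊥)
    (xbar : X) (hfin : f xbar ≠ ⊤)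
    (hmin : ∀ᶠ z in 𝓝 xbar, f xbar ≤ f z)
    (hL : Identifiable f {z | f z ≤ f xbar} xbar) :
    ∃ ε : ℝ, 0 < ε ∧ ∀ᶠ z in 𝓝 xbar,
      f xbar + ((ε * Metric.infDist z {w | f w ≤ f xbar} : ℝ) : EReal) ≤ f z := by
  classical
  set L : Set X := {w | f w ≤ f xbar} with hLdef
  set t : ℝ := (f xbar).toReal with ht
  have hfxbar : ((t : ℝ) : EReal) = f xbar := EReal.coe_toReal hfin (hbot xbar)
  have hLclosed : IsClosed L := hL.1
  have hLne : L.Nonempty := ⟨xbar, show f xbar ≤ f xbar from le_refl _⟩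
  -- a positive real lower bound on the slope along the filter
  obtain ⟨a, ha0, haL⟩ := exists_between hL.2.2
  have hev : ∀ᶠ x in 𝓝[Lᶜ] xbar ⊓ Filter.comap f (𝓝 (f xbar)), a < slopeM f x :=
    Filter.eventually_lt_of_lt_liminf haL
  have hane : min a 1 ≠ ⊤ := ((min_le_right a 1).trans_lt (by norm_num)).ne
  set α : ℝ := (min a 1).toReal with hα
  have hαpos : 0 < α :=
    ENNReal.toReal_pos (lt_min ha0 (by norm_num)).ne' hane
  have hαa : ENNReal.ofReal α ≤ a := by
    rw [hα, ENNReal.ofReal_toReal hane]; exact min_le_left a 1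
  -- unpack the eventual statement
  obtain ⟨p, hp, q, hq, hpq⟩ := Filter.eventually_inf.mp hev
  obtain ⟨r₁, hr₁pos, hr₁⟩ := Metric.mem_nhdsWithin_iff.mp hp
  obtain ⟨V, hV, hVq⟩ := Filter.mem_comap.mp hq
  -- η : V contains [t, t+η) (as EReals)
  have hVt : (fun r : ℝ => (r : EReal)) ⁻¹' V ∈ 𝓝 t := by
    have : V ∈ 𝓝 ((t : ℝ) : EReal) := by rw [hfxbar]; exact hV
    rw [EReal.nhds_coe, Filter.mem_map] at this
    exact this
  obtain ⟨η, hηpos, hη⟩ := Metric.mem_nhds_iff.mp hVt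
  have hηmem : ∀ r : ℝ, t ≤ r → r < t + η → ((r : ℝ) : EReal) ∈ V := by
    intro r h1 h2
    apply hη
    rw [Metric.mem_ball, Real.dist_eq, abs_lt]
    constructor <;> linarith
  -- local minimality radius
  obtain ⟨r₀, hr₀pos, hr₀⟩ := Metric.eventually_nhds_iff.mp hmin
  -- constants
  set R : ℝ := min r₀ r₁ / 2 with hRdef
  have hRpos : 0 < R := by positivity
  have hRr₀ : R < r₀ := by
    rw [hRdef]
    calc min r₀ r₁ / 2 ≤ r₀ / 2 := by gcongr; exact min_le_left _ _
    _ < r₀ := by linarith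
  have hRr₁ : R < r₁ := by
    rw [hRdef]
    calc min r₀ r₁ / 2 ≤ r₁ / 2 := by gcongr; exact min_le_right _ _
    _ < r₁ := by linarith
  set ε : ℝ := α / 2 with hε
  have hεpos : 0 < ε := by positivity
  set ρ : ℝ := min (R / 4) (η / (2 * ε)) with hρdef
  have hρpos : 0 < ρ := by positivity
  have hρR : ρ ≤ R / 4 := min_le_left _ _
  have hρη : 2 * ε * ρ ≤ η := by
    have h := min_le_right (R/4) (η / (2*ε))
    calc 2 * ε * ρ ≤ 2 * ε * (η / (2 * ε)) := by
          apply mul_le_mul_of_nonneg_left h (by positivity)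
      _ = η := by field_simp
  refine ⟨ε, hεpos, Metric.eventually_nhds_iff.mpr ⟨ρ, hρpos, ?_⟩⟩
  intro z hz
  by_contra hcon
  push_neg at hcon
  -- basic facts about z
  have hzxbar : Metric.infDist z L ≤ dist z xbar :=
    Metric.infDist_le_dist_of_mem (show f xbar ≤ f xbar from le_refl _)
  have hzr₀ : f xbar ≤ f z := hr₀ (by linarith [hρR.trans_lt (by linarith : R/4 < r₀)] : dist z xbar < r₀)
  have hzL : z ∉ L := by
    intro hzmem
    have h0 : Metric.infDist z L = 0 := Metric.infDist_zero_of_mem hzmem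
    rw [h0] at hcon
    simp only [mul_zero, EReal.coe_zero, add_zero] at hcon
    exact absurd hzr₀ (not_le.mpr hcon)
  have hd0 : 0 < Metric.infDist z L :=
    (hLclosed.notMem_iff_infDist_pos hLne).mp hzL
  set d : ℝ := Metric.infDist z L with hddef
  have hdρ : d < ρ := lt_of_le_of_lt hzxbar hz
  -- f z is finite, between t and t + ε*d
  have hflt : f z < ((t + ε * d : ℝ) : EReal) := by
    have h1 : f z < f xbar + ((ε * d : ℝ) : EReal) := hcon
    rw [← hfxbar, ← EReal.coe_add] at h1
    exact h1
  have hfztop : f z ≠ ⊤ := (hflt.trans (EReal.coe_lt_top _)).ne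
  set s : ℝ := (f z).toReal with hs
  have hfz : ((s : ℝ) : EReal) = f z := EReal.coe_toReal hfztop (hbot z)
  have hts : t < s := by
    have : f xbar < f z := lt_of_not_ge (by simpa [hLdef] using hzL)
    rw [← hfxbar, ← hfz] at this
    exact_mod_cast this
  have hsd : s < t + ε * d := by
    rw [← hfz] at hflt
    exact_mod_cast hflt
  -- Ekeland setup on the closed ball
  set Y : Set X := Metric.closedBall xbar R with hYdef
  have hYclosed : IsClosed Y := Metric.isClosed_closedBall
  haveI : CompleteSpace Y := hYclosed.completeSpace_coe
  have hzY : z ∈ Y := by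
    rw [hYdef, Metric.mem_closedBall]
    have : dist z xbar < ρ := hz
    linarith [hρR]
  have hfY : ∀ w : Y, f xbar ≤ f (w : X) := by
    intro w
    exact hr₀ (lt_of_le_of_lt (Metric.mem_closedBall.mp w.2) hRr₀)
  set M : ℝ := t + η with hM
  have htM : t < M := by rw [hM]; linarith
  set h : Y → EReal := fun w => min (f (w : X)) ((M : ℝ) : EReal) with hh
  have hhlb : ∀ w : Y, ((t : ℝ) : EReal) ≤ h w := by
    intro w
    apply le_min
    · rw [hfxbar]; exact hfY w
    · exact_mod_cast htM.le
  have hhub : ∀ w : Y, h w ≤ ((M : ℝ) : EReal) := fun w => min_le_right _ _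
  have hhne_top : ∀ w : Y, h w ≠ ⊤ := fun w => ((hhub w).trans_lt (EReal.coe_lt_top _)).ne
  have hhne_bot : ∀ w : Y, h w ≠ ⊥ := fun w =>
    ((EReal.bot_lt_coe t).trans_le (hhlb w)).ne'
  set g : Y → ℝ := fun w => (h w).toReal with hg
  have hgcoe : ∀ w : Y, ((g w : ℝ) : EReal) = h w := fun w =>
    EReal.coe_toReal (hhne_top w) (hhne_bot w)
  have hglb : ∀ w : Y, t ≤ g w := by
    intro w
    have := hhlb w
    rw [← hgcoe w] at this
    exact_mod_cast this
  -- g is lower semicontinuous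
  have hhlsc : LowerSemicontinuous h := by
    have h1 : LowerSemicontinuous fun w : Y => f (w : X) :=
      LowerSemicontinuous.comp hlsc continuous_subtype_val
    intro x r hr
    rw [hh] at hr
    simp only [lt_min_iff] at hr
    filter_upwards [h1 x r hr.1] with w hw
    exact lt_min hw hr.2
  have hglsc : LowerSemicontinuous g := by
    intro x r hr
    have hr' : ((r : ℝ) : EReal) < h x := by
      rw [← hgcoe x]; exact_mod_cast hr
    filter_upwards [hhlsc x _ hr'] with w hw
    have : ((r : ℝ) : EReal) < ((g w : ℝ) : EReal) := by rw [hgcoe w]; exact hw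
    exact_mod_cast this
  -- parameters for Ekeland
  set lam : ℝ := d / 2 with hlam
  have hlampos : 0 < lam := by positivity
  set c : ℝ := (s - t) / lam with hcdef
  have hcpos : 0 < c := by
    apply div_pos _ hlampos
    linarith
  have hcα : c < α := by
    rw [hcdef, div_lt_iff₀ hlampos, hlam]
    have : ε * d ≤ α * (d/2) * 2 / 2 := by rw [hε]; ring_nf; rfl
    nlinarith [hsd]
  obtain ⟨y, hy1, hy2⟩ := my_ekeland g hglsc t hglb c hcpos ⟨z, hzY⟩
  -- g at z equals s
  have hfzM : f z < ((M : ℝ) : EReal) := by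
    apply hflt.trans_le
    rw [hM]
    apply EReal.coe_le_coe_iff.mpr
    nlinarith [hρη, hdρ, hεpos]
  have hgz : g ⟨z, hzY⟩ = s := by
    show (min (f ((⟨z, hzY⟩ : Y) : X)) ((M:ℝ):EReal)).toReal = s
    rw [min_eq_left hfzM.le]
  -- distance bound : dist y z ≤ lam
  have hdistyz : dist (y : X) z ≤ lam := by
    have h1 : g y + c * dist y (⟨z, hzY⟩ : Y) ≤ g ⟨z, hzY⟩ := hy1
    have h2 : t ≤ g y := hglb y
    rw [hgz] at h1
    have h3 : c * dist y (⟨z, hzY⟩ : Y) ≤ s - t := by linarith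
    have h4 : dist y (⟨z, hzY⟩ : Y) ≤ (s - t) / c := by
      rw [le_div_iff₀ hcpos]; linarith
    have h5 : (s - t) / c = lam := by
      rw [hcdef]
      field_simp
      exact div_self (by linarith : s - t ≠ 0)
    rw [Subtype.dist_eq] at h4
    rw [← h5]; exact h4
  have hgy_le : g y ≤ s := by
    have h1 : g y + c * dist y (⟨z, hzY⟩ : Y) ≤ g ⟨z, hzY⟩ := hy1
    rw [hgz] at h1
    have hdn : (0:ℝ) ≤ dist y (⟨z, hzY⟩ : Y) := dist_nonneg
    nlinarith
  -- f at y is finite and equals g y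
  have hfyM : f (y : X) < ((M : ℝ) : EReal) := by
    by_contra hge
    push_neg at hge
    have : h y = ((M : ℝ) : EReal) := min_eq_right hge
    have hgyM : g y = M := by
      show (h y).toReal = M
      rw [this]; exact EReal.toReal_coe M
    have : s < M := by
      rw [hM]; nlinarith [hρη, hdρ, hεpos, hsd]
    linarith [hgy_le]
  have hhy : h y = f (y : X) := min_eq_left hfyM.le
  have hfy : ((g y : ℝ) : EReal) = f (y : X) := by rw [hgcoe y, hhy]
  -- position of y
  have hyx : dist (y : X) xbar ≤ 3 * ρ / 2 := by
    calc dist (y : X) xbar ≤ dist (y : X) z + dist z xbar := dist_triangle _ _ _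
      _ ≤ lam + ρ := add_le_add hdistyz hz.le
      _ ≤ ρ / 2 + ρ := by rw [hlam]; linarith [hdρ]
      _ = 3 * ρ / 2 := by ring
  -- y ∉ L
  have hyL : (y : X) ∉ L := by
    intro hymem
    have h1 : d ≤ Metric.infDist (y:X) L + dist z (y:X) :=
      Metric.infDist_le_infDist_add_dist
    rw [Metric.infDist_zero_of_mem hymem] at h1
    rw [dist_comm] at h1
    have : d ≤ lam := by linarith [hdistyz]
    rw [hlam] at this
    linarith
  -- f y ∈ V
  have hfyV : f (y : X) ∈ V := by
    rw [← hfy]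
    apply hηmem
    · exact hglb y
    · have : g y ≤ s := hgy_le
      have : s < t + η := by
        nlinarith [hρη, hdρ, hεpos, hsd]
      linarith [hgy_le]
  -- slope lower bound at y
  have hslope_lb : a < slopeM f (y : X) := by
    apply hpq
    constructor
    · apply hr₁
      constructor
      · rw [Metric.mem_ball]
        have : 3 * ρ / 2 < r₁ := by
          have : ρ ≤ R / 4 := hρR
          nlinarith [hRr₁, hRpos]
        linarith [hyx]
      · exact hyL
    · exact hVq hfyV
  -- slope upper bound at y
  have hfy_ne_top : f (y : X) ≠ ⊤ := by rw [← hfy]; exact EReal.coe_ne_top _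
  have hslope_ub : slopeM f (y : X) ≤ ENNReal.ofReal c := by
    rw [slopeM, if_neg hfy_ne_top]
    apply sInf_le
    refine ⟨c, hcpos, rfl, ?_⟩
    rw [Metric.eventually_nhds_iff]
    refine ⟨R / 2, by positivity, ?_⟩
    intro w hw
    have hwY : w ∈ Y := by
      rw [hYdef, Metric.mem_closedBall]
      calc dist w xbar ≤ dist w (y : X) + dist (y : X) xbar := dist_triangle _ _ _
        _ ≤ R / 2 + 3 * ρ / 2 := add_le_add hw.le hyx
        _ ≤ R / 2 + 3 * (R/4) / 2 := by linarith [hρR]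
        _ ≤ R := by linarith
    rcases lt_or_ge (f w) ((M : ℝ) : EReal) with hwM | hwM
    · -- f w < M : use Ekeland inequality
      have hwne : f w ≠ ⊤ := (hwM.trans (EReal.coe_lt_top _)).ne
      have hgw : ((g ⟨w, hwY⟩ : ℝ) : EReal) = f w := by
        rw [hgcoe ⟨w, hwY⟩]
        show min (f ((⟨w, hwY⟩ : Y) : X)) ((M:ℝ):EReal) = f w
        exact min_eq_left hwM.le
      have hek := hy2 ⟨w, hwY⟩
      rw [Subtype.dist_eq] at hek
      calc f (y : X) = ((g y : ℝ) : EReal) := hfy.symm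
        _ ≤ (((g ⟨w, hwY⟩ + c * dist w (y : X)) : ℝ) : EReal) := by exact_mod_cast hek
        _ = ((g ⟨w, hwY⟩ : ℝ) : EReal) + ((c * dist w (y:X) : ℝ) : EReal) := by
            rw [← EReal.coe_add]
        _ = f w + ((c * dist w (y:X) : ℝ) : EReal) := by rw [hgw]
    · -- f w ≥ M
      have h1 : f (y : X) ≤ ((M : ℝ) : EReal) := hfyM.le
      calc f (y : X) ≤ ((M : ℝ) : EReal) := h1
        _ ≤ f w := hwM
        _ = f w + (((0:ℝ)) : EReal) := by simp
        _ ≤ f w + ((c * dist w (y:X) : ℝ) : EReal) := by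
            apply add_le_add_right
            exact_mod_cast mul_nonneg hcpos.le dist_nonneg
  -- contradiction
  have h1 : ENNReal.ofReal α ≤ slopeM f (y : X) := hαa.trans hslope_lb.le
  have h2 : slopeM f (y : X) < ENNReal.ofReal α :=
    hslope_ub.trans_lt ((ENNReal.ofReal_lt_ofReal_iff hαpos).mpr hcα)
  exact absurd h1 (not_le.mpr h2)
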